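/- Let b ∈ ℝⁿ with b ≠ 0 and x₀ ∈ ℝⁿ with x₀ᵀb > 0, and let α be a real number with 0 < α < (bᵀx₀)/(bᵀb). Then the matrix H₀ = αI + ((x₀ − αb)(x₀ − αb)ᵀ)/((x₀ − αb)ᵀ b) is symmetric positive definite and satisfies H₀ b = x₀. -/

import Mathlib

open Matrix

lemma vecMulVec_mulVec' {n : ℕ} (v w x : Fin n → ℝ) :
    (vecMulVec v w).mulVec x = (w ⬝ᵥ x) • v := by
  funext i
  simp [Matrix.mulVec, dotProduct, vecMulVec_apply, Finset.mul_sum, mul_comm, mul_assoc,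
    mul_left_comm]

lemma dotProduct_self_pos' {n : ℕ} {x : Fin n → ℝ} (hx : x ≠ 0) : 0 < x ⬝ᵥ x :=
  lt_of_le_of_ne (Finset.sum_nonneg fun i _ => mul_self_nonneg (x i))
    (Ne.symm (dotProduct_self_eq_zero.not.mpr hx))

lemma aux_posdef {n : ℕ} (v b x₀ : Fin n → ℝ) (α : ℝ) (hα0 : 0 < α)
    (hc : 0 < v ⬝ᵥ b) (hvb : α • b + v = x₀) :
    (α • (1 : Matrix (Fin n) (Fin n) ℝ) + (v ⬝ᵥ b)⁻¹ • vecMulVec v v).PosDef ∧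
      (α • (1 : Matrix (Fin n) (Fin n) ℝ) + (v ⬝ᵥ b)⁻¹ • vecMulVec v v).mulVec b = x₀ := by
  constructor
  · refine posDef_iff_dotProduct_mulVec.mpr ⟨?_, ?_⟩
    · unfold Matrix.IsHermitian
      ext i j
      simp [conjTranspose_apply, Matrix.add_apply, Matrix.smul_apply, vecMulVec_apply,
        Matrix.one_apply]
      rcases eq_or_ne i j with h | h <;> simp [h, eq_comm, mul_comm]
    · intro x hx
      have hquad : star x ⬝ᵥ (α • (1 : Matrix (Fin n) (Fin n) ℝ)
          + (v ⬝ᵥ b)⁻¹ • vecMulVec v v).mulVec x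
          = α * (x ⬝ᵥ x) + (v ⬝ᵥ b)⁻¹ * ((v ⬝ᵥ x) * (v ⬝ᵥ x)) := by
        simp [add_mulVec, smul_mulVec, vecMulVec_mulVec', one_mulVec,
          dotProduct_add, dotProduct_smul, smul_eq_mul, dotProduct_comm x v]
      rw [hquad]
      have hxx : 0 < x ⬝ᵥ x := dotProduct_self_pos' hx
      have h2 : 0 ≤ (v ⬝ᵥ b)⁻¹ * ((v ⬝ᵥ x) * (v ⬝ᵥ x)) :=
        mul_nonneg (inv_nonneg.mpr hc.le) (mul_self_nonneg _)
      nlinarith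
  · rw [add_mulVec, smul_mulVec, one_mulVec, smul_mulVec, vecMulVec_mulVec',
      smul_smul, inv_mul_cancel₀ hc.ne', one_smul, hvb]

/-- Construction of a symmetric positive definite prior mean `H₀` for the inverse
model with `H₀ b = x₀`. -/
theorem stmt_5
    {n : ℕ} (b x₀ : Fin n → ℝ) (hb : b ≠ 0) (hx₀b : x₀ ⬝ᵥ b > 0)
    (α : ℝ) (hα0 : 0 < α) (hα : α < (b ⬝ᵥ x₀) / (b ⬝ᵥ b)) :
    let H₀ := α • (1 : Matrix (Fin n) (Fin n) ℝ)
      + ((x₀ - α • b) ⬝ᵥ b)⁻¹ • vecMulVec (x₀ - α • b) (x₀ - α • b)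
    H₀.PosDef ∧ H₀.mulVec b = x₀ := by
  intro H₀
  have hbb : (0:ℝ) < b ⬝ᵥ b := dotProduct_self_pos' hb
  have hc : (0:ℝ) < (x₀ - α • b) ⬝ᵥ b := by
    have h1 : α * (b ⬝ᵥ b) < b ⬝ᵥ x₀ := (lt_div_iff₀ hbb).mp hα
    have h2 : (x₀ - α • b) ⬝ᵥ b = x₀ ⬝ᵥ b - α * (b ⬝ᵥ b) := by
      simp [sub_dotProduct, smul_dotProduct]
    rw [h2, dotProduct_comm b x₀] at *
    linarith
  have hvb : α • b + (x₀ - α • b) = x₀ := by ext i; simp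
  exact aux_posdef (x₀ - α • b) b x₀ α hα0 hc hvb
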